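/- Let Λ be a left artinian ring satisfying condition (F). Then Λ satisfies condition (D): for every finitely generated indecomposable projective Λ-module P, every indecomposable submodule of P is either projective or simple. -/

import Mathlib

/-- rad X = (Jacobson radical of Λ) • X -/
def ModuleRad (Λ : Type) [Ring Λ] (X : Type) [AddCommGroup X] [Module Λ X] :
    Submodule Λ X :=
  Submodule.span Λ {z : X | ∃ r ∈ Ideal.jacobson (⊥ : Ideal Λ), ∃ x : X, z = r • x}

/-- composition length of a module, as the supremum of lengths of strictly
increasing chains of submodules from `⊥` to `⊤`. -/
noncomputable def ModuleLength (Λ : Type) [Ring Λ] (X : Type) [AddCommGroup X]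
    [Module Λ X] : ℕ∞ :=
  ⨆ n ∈ {n : ℕ | ∃ c : Fin (n + 1) → Submodule Λ X,
      StrictMono c ∧ c 0 = ⊥ ∧ c (Fin.last n) = ⊤}, (n : ℕ∞)

/-- a nonzero module that is not an internal direct sum of two nonzero submodules -/
def IndecomposableModule (Λ : Type) [Ring Λ] (X : Type) [AddCommGroup X]
    [Module Λ X] : Prop :=
  (∃ x : X, x ≠ 0) ∧
    ¬ ∃ A B : Submodule Λ X, A ≠ ⊥ ∧ B ≠ ⊥ ∧ IsCompl A B

/-- a minimal projective resolution of `M` -/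
structure MinProjRes (Λ : Type) [Ring Λ] (M : Type) [AddCommGroup M] [Module Λ M] where
  P : ℕ → Type
  acg : ∀ n, AddCommGroup (P n)
  mod : ∀ n, Module Λ (P n)
  proj : ∀ n, Module.Projective Λ (P n)
  fg : ∀ n, Module.Finite Λ (P n)
  d0 : P 0 →ₗ[Λ] M
  d : ∀ n, P (n + 1) →ₗ[Λ] P n
  surj : Function.Surjective d0
  exact0 : LinearMap.range (d 0) = LinearMap.ker d0
  exact : ∀ n, LinearMap.range (d (n + 1)) = LinearMap.ker (d n)
  min0 : LinearMap.ker d0 ≤ ModuleRad Λ (P 0)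
  min : ∀ n, LinearMap.ker (d n) ≤ ModuleRad Λ (P (n + 1))

attribute [instance] MinProjRes.acg MinProjRes.mod

/-- the projective dimension read off from a minimal projective resolution:
`sup {n | Pₙ ≠ 0}` in `ℕ∞` -/
noncomputable def MinProjRes.pd {Λ : Type} [Ring Λ] {M : Type} [AddCommGroup M]
    [Module Λ M] (res : MinProjRes Λ M) : ℕ∞ :=
  ⨆ n ∈ {n : ℕ | ∃ x : res.P n, x ≠ 0}, (n : ℕ∞)

/-- Condition (F) -/
def ConditionF (Λ : Type) [Ring Λ] : Prop :=
  ∀ (P : Type) [AddCommGroup P] [Module Λ P],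
    Module.Finite Λ P → Module.Projective Λ P → IndecomposableModule Λ P →
      (Module.Projective Λ ↥(ModuleRad Λ P) ∨ IsSimpleModule Λ ↥(ModuleRad Λ P))


namespace CFD

open Submodule LinearMap

variable {Λ : Type} [Ring Λ]

/-- The Jacobson radical as a left ideal. -/
abbrev Jrad (Λ : Type) [Ring Λ] : Ideal Λ := Ideal.jacobson (⊥ : Ideal Λ)

variable {X : Type} [AddCommGroup X] [Module Λ X]

/-- product of a left ideal with a submodule -/
def idSmul (I : Ideal Λ) (N : Submodule Λ X) : Submodule Λ X :=
  Submodule.span Λ {z : X | ∃ r ∈ I, ∃ x ∈ N, z = r • x}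

theorem smul_mem_idSmul {I : Ideal Λ} {N : Submodule Λ X} {r : Λ} (hr : r ∈ I)
    {x : X} (hx : x ∈ N) : r • x ∈ idSmul I N :=
  Submodule.subset_span ⟨r, hr, x, hx, rfl⟩

theorem idSmul_le {I : Ideal Λ} {N K : Submodule Λ X}
    (h : ∀ r ∈ I, ∀ x ∈ N, r • x ∈ K) : idSmul I N ≤ K := by
  refine Submodule.span_le.mpr ?_
  rintro z ⟨r, hr, x, hx, rfl⟩
  exact h r hr x hx

theorem idSmul_le_right (I : Ideal Λ) (N : Submodule Λ X) : idSmul I N ≤ N :=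
  idSmul_le fun r _ x hx => N.smul_mem r hx

theorem idSmul_mono_right (I : Ideal Λ) {N N' : Submodule Λ X} (h : N ≤ N') :
    idSmul I N ≤ idSmul I N' :=
  idSmul_le fun r hr x hx => smul_mem_idSmul hr (h hx)

theorem idSmul_induction {I : Ideal Λ} {N : Submodule Λ X} {P : X → Prop}
    (h0 : P 0) (hadd : ∀ a b, P a → P b → P (a + b))
    (hgen : ∀ r ∈ I, ∀ x ∈ N, P (r • x)) : ∀ z ∈ idSmul I N, P z := by
  intro z hz
  obtain ⟨c, hsupp, rfl⟩ := mem_span_set.mp hz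
  rw [Finsupp.sum]
  refine Finset.sum_induction _ P hadd h0 ?_
  intro g hg
  obtain ⟨r, hr, x, hx, rfl⟩ := hsupp hg
  have h1 : c (r • x) * r ∈ I := by
    simpa [smul_eq_mul] using I.smul_mem (c (r • x)) hr
  simpa [smul_smul] using hgen _ h1 x hx

theorem idSmul_assoc (I K : Ideal Λ) (N : Submodule Λ X) :
    idSmul I (idSmul K N) = idSmul (idSmul I K) N := by
  apply le_antisymm
  · refine idSmul_le fun r hr z hz => ?_
    refine idSmul_induction (P := fun z => r • z ∈ idSmul (idSmul I K) N)
      (by simp) (fun a b ha hb => by show r • (a + b) ∈ _; rw [smul_add]; exact add_mem ha hb)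
      (fun k hk x hx => ?_) z hz
    show r • (k • x) ∈ _
    rw [smul_smul]
    exact smul_mem_idSmul (by simpa [smul_eq_mul] using smul_mem_idSmul (N := K) hr hk) hx
  · refine idSmul_le fun t ht y hy => ?_
    refine idSmul_induction (P := fun t : Λ => t • y ∈ idSmul I (idSmul K N))
      (by simp) (fun a b ha hb => by show (a + b) • y ∈ _; rw [add_smul]; exact add_mem ha hb)
      (fun r hr k hk => ?_) t ht
    show (r • k) • y ∈ _
    rw [smul_eq_mul, mul_smul]
    exact smul_mem_idSmul hr (smul_mem_idSmul hk hy)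

theorem idSmul_top_left (N : Submodule Λ X) : idSmul (⊤ : Ideal Λ) N = N := by
  refine le_antisymm (idSmul_le_right _ _) fun x hx => ?_
  have h1 := smul_mem_idSmul (I := (⊤ : Ideal Λ)) (r := (1 : Λ)) Submodule.mem_top hx
  simpa using h1

theorem idSmul_bot_left (N : Submodule Λ X) : idSmul (⊥ : Ideal Λ) N = ⊥ := by
  refine le_bot_iff.mp (idSmul_le fun r hr x _ => ?_)
  rw [Submodule.mem_bot] at hr ⊢
  rw [hr, zero_smul]

theorem moduleRad_eq : ModuleRad Λ X = idSmul (Jrad Λ) ⊤ := by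
  unfold ModuleRad idSmul
  congr 1
  ext z
  constructor
  · rintro ⟨r, hr, x, rfl⟩; exact ⟨r, hr, x, Submodule.mem_top, rfl⟩
  · rintro ⟨r, hr, x, _, rfl⟩; exact ⟨r, hr, x, rfl⟩

/-- The Jacobson radical is stable under right multiplication. -/
theorem mul_mem_jrad {x : Λ} (c : Λ) (hx : x ∈ Jrad Λ) : x * c ∈ Jrad Λ := by
  rw [Jrad, Ideal.mem_jacobson_iff] at hx ⊢
  intro y
  obtain ⟨z, hz⟩ := hx (c * y)
  rw [Ideal.mem_bot] at hz
  set u := y * x with hu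
  have h' : z * (c * u) + z = 1 := by
    have : z * (c * u) + z - 1 = z * (c * y) * x + z - 1 := by rw [hu]; noncomm_ring
    rw [← sub_eq_zero, this, hz]
  refine ⟨1 - u * z * c, ?_⟩
  rw [Ideal.mem_bot]
  have key : (1 - u * z * c) * (u * c + 1) = 1 := by
    calc (1 - u * z * c) * (u * c + 1)
        = 1 + u * c - u * (z * (c * u) + z) * c := by noncomm_ring
      _ = 1 + u * c - u * 1 * c := by rw [h']
      _ = 1 := by noncomm_ring
  calc (1 - u * z * c) * y * (x * c) + (1 - u * z * c) - 1
      = (1 - u * z * c) * (u * c + 1) - 1 := by rw [hu]; noncomm_ring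
    _ = 0 := by rw [key]; exact sub_self 1

theorem exists_left_inv {x : Λ} (hx : x ∈ Jrad Λ) : ∃ v, v * (1 - x) = 1 := by
  have h1 : (1 - x) - 1 ∈ Ideal.jacobson (⊥ : Ideal Λ) := by
    simpa using (Jrad Λ).neg_mem hx
  obtain ⟨s, hs⟩ := Ideal.exists_mul_sub_mem_of_sub_one_mem_jacobson (1 - x) h1
  rw [Ideal.mem_bot, sub_eq_zero] at hs
  exact ⟨s, hs⟩

/-- descending chain of powers of the radical -/
def Jp (Λ : Type) [Ring Λ] : ℕ → Ideal Λ
  | 0 => ⊤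
  | n + 1 => idSmul (Jrad Λ) (Jp Λ n)

theorem Jp_succ_le_jrad (n : ℕ) : Jp Λ (n + 1) ≤ Jrad Λ := by
  refine idSmul_le fun r hr x _ => ?_
  simpa [smul_eq_mul] using mul_mem_jrad x hr

theorem Jp_succ_le (n : ℕ) : Jp Λ (n + 1) ≤ Jp Λ n :=
  idSmul_le_right _ _

theorem Jp_antitone : Antitone (Jp Λ) :=
  antitone_nat_of_succ_le Jp_succ_le

theorem Jp_add (a b : ℕ) : Jp Λ (a + b) = idSmul (Jp Λ a) (Jp Λ b) := by
  induction a with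
  | zero => rw [Nat.zero_add, show Jp Λ 0 = (⊤ : Ideal Λ) from rfl, idSmul_top_left]
  | succ a ih =>
    have h1 : a + 1 + b = (a + b) + 1 := by omega
    rw [h1, show Jp Λ ((a + b) + 1) = idSmul (Jrad Λ) (Jp Λ (a + b)) from rfl, ih,
      idSmul_assoc]
    rfl

theorem Jp_nilpotent [IsArtinianRing Λ] : ∃ n, Jp Λ n = ⊥ := by
  obtain ⟨n, hn⟩ := IsArtinian.monotone_stabilizes (R := Λ) (M := Λ)
    ⟨fun k => OrderDual.toDual (Jp Λ k), fun k l hkl => Jp_antitone hkl⟩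
  have hstab : ∀ m, n ≤ m → Jp Λ n = Jp Λ m := fun m hm => hn m hm
  refine ⟨n + 1, ?_⟩
  by_contra hI
  set I := Jp Λ (n + 1) with hIdef
  have hIn : I = Jp Λ n := (hstab (n + 1) (Nat.le_succ n)).symm
  have hII : idSmul I I = I := by
    have h1 := Jp_add (Λ := Λ) (n + 1) (n + 1)
    rw [← hIdef, ← hstab (n + 1 + (n + 1)) (by omega), hIn] at h1
    rw [hIn, ← h1]
  have hIJ : I ≤ Jrad Λ := Jp_succ_le_jrad n
  have htopS : (⊤ : Ideal Λ) ∈ {A : Ideal Λ | idSmul I A ≠ ⊥} := by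
    intro h
    apply hI
    refine le_bot_iff.mp (le_trans (fun x hx => ?_) h.le)
    have h2 := smul_mem_idSmul (I := I) (N := (⊤ : Ideal Λ)) hx (Submodule.mem_top (x := (1:Λ)))
    simpa using h2
  obtain ⟨A₀, hA₀S, hmin⟩ := IsArtinian.set_has_minimal
    {A : Ideal Λ | idSmul I A ≠ ⊥} ⟨⊤, htopS⟩
  have hex : ∃ a ∈ A₀, Submodule.map (LinearMap.toSpanSingleton Λ Λ a) I ≠ ⊥ := by
    by_contra h
    push_neg at h
    apply hA₀S
    refine le_bot_iff.mp (idSmul_le fun r hr x hx => ?_)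
    exact (h x hx).le ⟨r, hr, rfl⟩
  obtain ⟨a, haA₀, hIa⟩ := hex
  set ra := LinearMap.toSpanSingleton Λ Λ a with hra
  have hmap_le : Submodule.map ra I ≤ idSmul I (Submodule.span Λ {a}) := by
    rintro _ ⟨r, hr, rfl⟩
    exact smul_mem_idSmul hr (Submodule.mem_span_singleton_self a)
  have hspanS : idSmul I (Submodule.span Λ {a}) ≠ ⊥ := by
    intro h
    exact hIa (le_bot_iff.mp (le_trans hmap_le h.le))
  have hspan_le : Submodule.span Λ {a} ≤ A₀ :=
    Submodule.span_le.mpr (Set.singleton_subset_iff.mpr haA₀)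
  have hA₀eq : Submodule.span Λ {a} = A₀ :=
    hspan_le.lt_or_eq.resolve_left (hmin _ hspanS)
  set B := Submodule.map ra I with hB
  have hBle : B ≤ A₀ := by
    rw [← hA₀eq]
    rintro _ ⟨r, hr, rfl⟩
    exact Submodule.smul_mem _ r (Submodule.mem_span_singleton_self a)
  have hBS : idSmul I B ≠ ⊥ := by
    intro h
    apply hIa
    have hle : Submodule.map ra (idSmul I I) ≤ idSmul I B := by
      rintro _ ⟨z, hz, rfl⟩
      refine idSmul_induction (P := fun z => ra z ∈ idSmul I B)
        (by simp) (fun u v hu hv => by show ra (u + v) ∈ _; rw [map_add]; exact add_mem hu hv)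
        (fun r hr x hx => ?_) z hz
      show ra (r • x) ∈ _
      rw [map_smul]
      exact smul_mem_idSmul hr ⟨x, hx, rfl⟩
    rw [hII] at hle
    exact le_bot_iff.mp (le_trans hle h.le)
  have hBeq : B = A₀ := hBle.lt_or_eq.resolve_left (hmin _ hBS)
  have haB : a ∈ B := hBeq ▸ haA₀
  obtain ⟨x, hxI, hxa⟩ := haB
  obtain ⟨v, hv⟩ := exists_left_inv (hIJ hxI)
  have ha0 : a = 0 := by
    have h0 : (1 - x) * a = 0 := by
      have : ra x = x * a := by rw [hra]; simp [LinearMap.toSpanSingleton_apply, smul_eq_mul]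
      rw [sub_mul, one_mul, ← this, hxa, sub_self]
    calc a = 1 * a := (one_mul a).symm
      _ = v * (1 - x) * a := by rw [hv]
      _ = v * ((1 - x) * a) := by rw [mul_assoc]
      _ = 0 := by rw [h0, mul_zero]
  apply hIa
  refine le_bot_iff.mp ?_
  rintro _ ⟨r, hr, rfl⟩
  rw [hra, ha0]
  simp


theorem rad_ne_top [IsArtinianRing Λ] (hX : ∃ x : X, x ≠ 0) : ModuleRad Λ X ≠ ⊤ := by
  intro htop
  obtain ⟨n, hn⟩ := Jp_nilpotent (Λ := Λ)
  have h : ∀ k, idSmul (Jp Λ k) (⊤ : Submodule Λ X) = ⊤ := by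
    intro k
    induction k with
    | zero => exact idSmul_top_left _
    | succ k ih =>
      rw [show Jp Λ (k + 1) = idSmul (Jrad Λ) (Jp Λ k) from rfl, ← idSmul_assoc, ih,
        ← moduleRad_eq, htop]
  obtain ⟨x, hx⟩ := hX
  have h2 := h n
  rw [hn, idSmul_bot_left] at h2
  exact hx ((Submodule.mem_bot Λ).mp (h2 ▸ Submodule.mem_top (x := x)))

theorem jac_inf [IsArtinianRing Λ] :
    ∃ s : Finset (Ideal Λ), (∀ m ∈ s, IsCoatom m) ∧ Jrad Λ = s.inf id := by
  classical
  obtain ⟨I₀, hI₀, hmin⟩ := IsArtinian.set_has_minimal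
    {A : Ideal Λ | ∃ s : Finset (Ideal Λ), (∀ m ∈ s, IsCoatom m) ∧ A = s.inf id}
    ⟨⊤, ∅, by simp, by simp⟩
  obtain ⟨s, hs, hseq⟩ := hI₀
  have hle : Jrad Λ ≤ I₀ := by
    rw [hseq]
    refine Finset.le_inf fun m hm => sInf_le ⟨bot_le, Ideal.isMaximal_def.mpr (hs m hm)⟩
  have hge : I₀ ≤ Jrad Λ := by
    refine le_sInf ?_
    rintro m ⟨-, hm⟩
    have hcoatom : IsCoatom m := Ideal.isMaximal_def.mp hm
    by_contra hnle
    have hmem : I₀ ⊓ m ∈ {A : Ideal Λ | ∃ s : Finset (Ideal Λ),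
        (∀ m ∈ s, IsCoatom m) ∧ A = s.inf id} := by
      refine ⟨insert m s, ?_, ?_⟩
      · intro m' hm'
        rcases Finset.mem_insert.mp hm' with rfl | hm's
        · exact hcoatom
        · exact hs m' hm's
      · rw [Finset.inf_insert, ← hseq, inf_comm]
        rfl
    exact hmin _ hmem (lt_of_le_of_ne inf_le_left fun h => hnle (h ▸ inf_le_right))
  refine ⟨s, hs, ?_⟩
  rw [← hseq]
  exact le_antisymm hle hge

/-- product of two semisimple modules is semisimple -/
theorem prod_ss (M N : Type) [AddCommGroup M] [Module Λ M] [AddCommGroup N] [Module Λ N]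
    [IsSemisimpleModule Λ M] [IsSemisimpleModule Λ N] : IsSemisimpleModule Λ (M × N) := by
  refine isSemisimpleModule_of_isSemisimpleModule_submodule' (ι := Bool)
    (p := fun b => bif b then LinearMap.range (LinearMap.inl Λ M N)
      else LinearMap.range (LinearMap.inr Λ M N)) ?_ ?_
  · rintro (_ | _)
    · exact .congr (LinearEquiv.ofInjective _ LinearMap.inr_injective).symm
    · exact .congr (LinearEquiv.ofInjective _ LinearMap.inl_injective).symm
  · rw [eq_top_iff]
    rintro ⟨m, n⟩ -
    rw [iSup_bool_eq]
    have h1 : ((m, 0) : M × N) ∈ LinearMap.range (LinearMap.inl Λ M N) := ⟨m, rfl⟩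
    have h2 : ((0, n) : M × N) ∈ LinearMap.range (LinearMap.inr Λ M N) := ⟨n, rfl⟩
    have : ((m, n) : M × N) = (m, 0) + (0, n) := by simp
    rw [this]
    exact Submodule.add_mem_sup h1 h2

theorem ss_quot_inf [IsArtinianRing Λ] (s : Finset (Ideal Λ)) (hs : ∀ m ∈ s, IsCoatom m) :
    IsSemisimpleModule Λ (Λ ⧸ (s.inf id : Ideal Λ)) := by
  classical
  induction s using Finset.induction_on with
  | empty =>
    have hsub : Subsingleton (Λ ⧸ ((∅ : Finset (Ideal Λ)).inf id : Ideal Λ)) := by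
      rw [Submodule.Quotient.subsingleton_iff]
      simp
    haveI : Subsingleton (Submodule Λ (Λ ⧸ ((∅ : Finset (Ideal Λ)).inf _root_.id : Ideal Λ))) :=
      ⟨fun a b => by
        ext x
        rw [Subsingleton.elim x 0]
        exact iff_of_true (zero_mem a) (zero_mem b)⟩
    exact (isSemisimpleModule_iff Λ _).mpr Subsingleton.instComplementedLattice
  | @insert a s ha ih =>
    haveI ihs := ih fun m hm => hs m (Finset.mem_insert_of_mem hm)
    haveI hsimple : IsSimpleModule Λ (Λ ⧸ (a : Ideal Λ)) :=
      isSimpleModule_iff_isCoatom.mpr (hs a (Finset.mem_insert_self a s))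
    set f : Λ →ₗ[Λ] (Λ ⧸ (a : Ideal Λ)) × (Λ ⧸ (s.inf _root_.id : Ideal Λ)) :=
      (Submodule.mkQ _).prod (Submodule.mkQ _) with hf
    have hker : LinearMap.ker f = ((insert a s).inf _root_.id : Ideal Λ) := by
      rw [hf, LinearMap.ker_prod, Submodule.ker_mkQ, Submodule.ker_mkQ, Finset.inf_insert]
      rfl
    haveI : IsSemisimpleModule Λ ((Λ ⧸ (a : Ideal Λ)) × (Λ ⧸ (s.inf _root_.id : Ideal Λ))) :=
      prod_ss _ _
    have e : (Λ ⧸ ((insert a s).inf _root_.id : Ideal Λ)) ≃ₗ[Λ] LinearMap.range f :=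
      (Submodule.quotEquivOfEq _ _ hker.symm).trans f.quotKerEquivRange
    exact .congr e

theorem semisimple_of_jtorsion (Y : Type) [AddCommGroup Y] [Module Λ Y] [IsArtinianRing Λ]
    (hJY : ∀ r ∈ Jrad Λ, ∀ y : Y, r • y = (0 : Y)) : IsSemisimpleModule Λ Y := by
  obtain ⟨s, hs, hJeq⟩ := jac_inf (Λ := Λ)
  haveI h0 : IsSemisimpleModule Λ (Λ ⧸ (Jrad Λ : Submodule Λ Λ)) := by
    have := ss_quot_inf s hs
    exact .congr (Submodule.quotEquivOfEq _ _ (by rw [hJeq]))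
  refine isSemisimpleModule_of_isSemisimpleModule_submodule'
    (p := fun y : Y => LinearMap.range (LinearMap.toSpanSingleton Λ Y y)) ?_ ?_
  · intro y
    have hJker : (Jrad Λ : Submodule Λ Λ) ≤ LinearMap.ker (LinearMap.toSpanSingleton Λ Y y) := by
      intro r hr
      rw [LinearMap.mem_ker, LinearMap.toSpanSingleton_apply]
      exact hJY r hr y
    have e := Submodule.quotientQuotientEquivQuotient (Jrad Λ : Submodule Λ Λ)
      (LinearMap.ker (LinearMap.toSpanSingleton Λ Y y)) hJker
    have e2 : ↥(LinearMap.range (LinearMap.toSpanSingleton Λ Y y)) ≃ₗ[Λ]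
        (Λ ⧸ (Jrad Λ : Submodule Λ Λ)) ⧸ (Submodule.map (Jrad Λ : Submodule Λ Λ).mkQ
          (LinearMap.ker (LinearMap.toSpanSingleton Λ Y y))) :=
      (LinearMap.toSpanSingleton Λ Y y).quotKerEquivRange.symm.trans e.symm
    exact .congr e2
  · rw [eq_top_iff]
    intro y _
    have : y ∈ LinearMap.range (LinearMap.toSpanSingleton Λ Y y) := ⟨1, one_smul _ _⟩
    exact le_iSup (fun y : Y => LinearMap.range (LinearMap.toSpanSingleton Λ Y y)) y this

theorem noeth (X : Type) [AddCommGroup X] [Module Λ X] [IsArtinianRing Λ]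
    [Module.Finite Λ X] : IsNoetherian Λ X := by
  obtain ⟨n, hn⟩ := Jp_nilpotent (Λ := Λ)
  set N : ℕ → Submodule Λ X := fun k => idSmul (Jp Λ k) ⊤ with hN
  have hN0 : N 0 = ⊤ := idSmul_top_left _
  have hNsucc : ∀ k, N (k + 1) = idSmul (Jrad Λ) (N k) := fun k => by
    rw [hN]
    simp only
    rw [show Jp Λ (k + 1) = idSmul (Jrad Λ) (Jp Λ k) from rfl, ← idSmul_assoc]
  have hNn : N n = ⊥ := by
    rw [hN]
    simp only
    rw [hn, idSmul_bot_left]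
  have key : ∀ d, IsNoetherian Λ ↥(N (n - d)) := by
    intro d
    induction d with
    | zero =>
      rw [Nat.sub_zero, hNn]
      infer_instance
    | succ d ih =>
      rcases le_or_gt n d with hnd | hdn
      · rw [show n - (d + 1) = n - d by omega]
        exact ih
      · have hidx : (n - (d + 1)) + 1 = n - d := by omega
        set K := N (n - (d + 1)) with hK
        have hsub : N (n - d) = idSmul (Jrad Λ) K := by rw [← hidx, hNsucc]
        have hKle : N (n - d) ≤ K := by rw [hsub]; exact idSmul_le_right _ _
        set S : Submodule Λ ↥K := Submodule.comap K.subtype (N (n - d)) with hS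
        refine (isNoetherian_iff_submodule_quotient S).mpr ⟨?_, ?_⟩
        · exact isNoetherian_of_linearEquiv (Submodule.comapSubtypeEquivOfLe hKle).symm
        · have hss : IsSemisimpleModule Λ (↥K ⧸ S) := by
            refine semisimple_of_jtorsion (Λ := Λ) (↥K ⧸ S) fun r hr y => ?_
            obtain ⟨x, rfl⟩ := Submodule.Quotient.mk_surjective S y
            rw [← Submodule.Quotient.mk_smul, Submodule.Quotient.mk_eq_zero]
            rw [hS, Submodule.mem_comap, hsub]
            simpa using smul_mem_idSmul hr x.2
          haveI := hss
          haveI hart2 : IsArtinian Λ (↥K ⧸ S) := inferInstance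
          exact ((IsSemisimpleModule.finite_tfae (R := Λ) (M := ↥K ⧸ S)).out 2 1).mp hart2
  have := key n
  rw [Nat.sub_self, hN0] at this
  exact isNoetherian_top_iff.mp this

theorem exists_coatom_above {X : Type} [AddCommGroup X] [Module Λ X] [IsNoetherian Λ X]
    {N : Submodule Λ X} (hN : N ≠ ⊤) : ∃ m : Submodule Λ X, IsCoatom m ∧ N ≤ m := by
  obtain ⟨m, ⟨hmS, hNm⟩, hmax⟩ := set_has_maximal_iff_noetherian.mpr ‹_›
    {K : Submodule Λ X | K ≠ ⊤ ∧ N ≤ K} ⟨N, hN, le_rfl⟩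
  refine ⟨m, ⟨hmS, fun K hK => ?_⟩, hNm⟩
  by_contra hKtop
  exact hmax K ⟨hKtop, hNm.trans hK.le⟩ hK

theorem rad_le_coatom {m : Submodule Λ X} (hm : IsCoatom m) : ModuleRad Λ X ≤ m := by
  rw [moduleRad_eq]
  refine idSmul_le fun r hr x _ => ?_
  by_contra hrx
  have hsup : m ⊔ Submodule.span Λ {r • x} = ⊤ :=
    hm.2 _ (left_lt_sup.mpr fun h => hrx (h (Submodule.mem_span_singleton_self _)))
  obtain ⟨m', hm', y, hy, hxy⟩ := Submodule.mem_sup.mp (hsup ▸ Submodule.mem_top (x := x))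
  obtain ⟨c, rfl⟩ := Submodule.mem_span_singleton.mp hy
  have hcr : c * r ∈ Jrad Λ := by
    simpa [smul_eq_mul] using (Jrad Λ).smul_mem c hr
  obtain ⟨v, hv⟩ := exists_left_inv hcr
  have hxm : x ∈ m := by
    have h1 : (1 - c * r) • x = m' := by
      rw [smul_smul] at hxy
      rw [sub_smul, one_smul]
      exact (eq_sub_of_add_eq hxy).symm
    have h2 : x = v • ((1 - c * r) • x) := by rw [smul_smul, hv, one_smul]
    rw [h2, h1]
    exact m.smul_mem v hm'
  exact hrx (m.smul_mem r hxm)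

theorem rad_missing {X : Type} [AddCommGroup X] [Module Λ X] [IsArtinianRing Λ]
    [Module.Finite Λ X] {x : X} (hx : x ∉ ModuleRad Λ X) :
    ∃ m : Submodule Λ X, IsCoatom m ∧ x ∉ m := by
  haveI := noeth (Λ := Λ) X
  set R₀ := ModuleRad Λ X with hR₀
  haveI hssY : IsSemisimpleModule Λ (X ⧸ R₀) := by
    refine semisimple_of_jtorsion (Λ := Λ) (X ⧸ R₀) fun r hr y => ?_
    obtain ⟨z, rfl⟩ := Submodule.Quotient.mk_surjective R₀ y
    rw [← Submodule.Quotient.mk_smul, Submodule.Quotient.mk_eq_zero, hR₀, moduleRad_eq]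
    exact smul_mem_idSmul hr Submodule.mem_top
  have hxbar : R₀.mkQ x ≠ 0 := by
    intro h
    exact hx ((Submodule.Quotient.mk_eq_zero _).mp h)
  obtain ⟨C, hC⟩ := exists_isCompl (Submodule.span Λ {R₀.mkQ x})
  have hCne : C ≠ ⊤ := by
    intro h
    have h1 := hC.inf_eq_bot
    rw [h, inf_top_eq] at h1
    exact hxbar (by
      have h2 : R₀.mkQ x ∈ Submodule.span Λ {R₀.mkQ x} := Submodule.mem_span_singleton_self _
      rw [h1] at h2
      exact (Submodule.mem_bot Λ).mp h2)
  obtain ⟨mY, hmY, hCmY⟩ := exists_coatom_above hCne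
  have hxmY : R₀.mkQ x ∉ mY := by
    intro hmem
    refine hmY.1 (top_le_iff.mp ?_)
    rw [← hC.sup_eq_top]
    exact sup_le (Submodule.span_le.mpr (Set.singleton_subset_iff.mpr hmem)) hCmY
  refine ⟨Submodule.comap R₀.mkQ mY, ⟨?_, ?_⟩, fun hmem => hxmY hmem⟩
  · intro h
    exact hxmY (h ▸ Submodule.mem_top (x := x) : x ∈ Submodule.comap R₀.mkQ mY)
  · intro K hK
    obtain ⟨y, hyK, hynot⟩ := SetLike.exists_of_lt hK
    have h1 : mY < Submodule.map R₀.mkQ K := by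
      refine lt_of_le_of_ne ?_ fun h => hynot ?_
      · have : mY = Submodule.map R₀.mkQ (Submodule.comap R₀.mkQ mY) := by
          rw [Submodule.map_comap_eq, Submodule.range_mkQ, top_inf_eq]
        rw [this]
        exact Submodule.map_mono hK.le
      · rw [Submodule.mem_comap, h]
        exact Submodule.mem_map_of_mem hyK
    have h2 : Submodule.map R₀.mkQ K = ⊤ := hmY.2 _ h1
    have hRK : R₀ ≤ K := by
      intro z hz
      refine hK.le ?_
      rw [Submodule.mem_comap, Submodule.mkQ_apply, (Submodule.Quotient.mk_eq_zero R₀).mpr hz]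
      exact zero_mem mY
    have h3 : Submodule.comap R₀.mkQ (Submodule.map R₀.mkQ K) = K := by
      rw [Submodule.comap_map_eq, Submodule.ker_mkQ]
      exact sup_eq_left.mpr hRK
    rw [h2, Submodule.comap_top] at h3
    exact h3.symm


theorem coatom_unique {W : Type} [AddCommGroup W] [Module Λ W] [IsArtinianRing Λ]
    [Module.Finite Λ W] (hproj : Module.Projective Λ W) (hind : IndecomposableModule Λ W)
    {m₁ m₂ : Submodule Λ W} (h₁ : IsCoatom m₁) (h₂ : IsCoatom m₂) : m₁ = m₂ := by
  by_contra hne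
  haveI : IsNoetherian Λ W := noeth (Λ := Λ) W
  have hsup : m₁ ⊔ m₂ = ⊤ := by
    refine h₁.2 _ (left_lt_sup.mpr fun hle => hne ?_)
    exact (hle.lt_or_eq.resolve_left fun hlt => h₁.1 (h₂.2 _ hlt)).symm
  set q := m₁.mkQ with hq
  have hqsurj : Function.Surjective (q.comp m₂.subtype) := by
    intro z
    obtain ⟨b, rfl⟩ := Submodule.Quotient.mk_surjective m₁ z
    obtain ⟨u, hu, v, hv, huv⟩ := Submodule.mem_sup.mp (hsup ▸ Submodule.mem_top (x := b))
    refine ⟨⟨v, hv⟩, ?_⟩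
    show q v = Submodule.Quotient.mk b
    rw [hq, Submodule.mkQ_apply]
    refine (Submodule.Quotient.eq m₁).mpr ?_
    have : v - b = -u := by rw [← huv]; abel
    rw [this]
    exact m₁.neg_mem hu
  haveI := hproj
  obtain ⟨h, hh⟩ := Module.projective_lifting_property (q.comp m₂.subtype) q hqsurj
  set f : W →ₗ[Λ] W := m₂.subtype.comp h with hfdef
  have hfrange : ∀ w, f w ∈ m₂ := fun w => (h w).2
  have hqf : ∀ w, q (f w) = q w := fun w => by
    have h1 := LinearMap.ext_iff.mp hh w
    simpa [hfdef] using h1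
  obtain ⟨n0, hn0⟩ := Filter.eventually_atTop.mp f.eventually_isCompl_ker_pow_range_pow
  set n := max n0 1 with hn
  have hc := hn0 n (le_max_left _ _)
  have hker_or : LinearMap.ker (f ^ n) = ⊥ ∨ LinearMap.range (f ^ n) = ⊥ := by
    by_contra hcon
    push_neg at hcon
    exact hind.2 ⟨_, _, hcon.1, hcon.2, hc⟩
  rcases hker_or with hbot | hzero
  · have hrtop : LinearMap.range (f ^ n) = ⊤ := by
      have hcd := hc.codisjoint
      rw [codisjoint_iff, hbot, bot_sup_eq] at hcd
      exact hcd
    have h1 : LinearMap.range (f ^ n) ≤ m₂ := by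
      rintro z ⟨w, rfl⟩
      rw [show n = (n - 1) + 1 by omega, pow_succ']
      rw [Module.End.mul_apply]
      exact hfrange _
    rw [hrtop] at h1
    exact h₂.1 (top_le_iff.mp h1)
  · have hf0 : f ^ n = 0 := by rwa [LinearMap.range_eq_bot] at hzero
    have hgeom : ((1 : W →ₗ[Λ] W) - f) * (∑ i ∈ Finset.range n, f ^ i) = 1 := by
      have hgs := mul_geom_sum f n
      have : ((1 : W →ₗ[Λ] W) - f) * (∑ i ∈ Finset.range n, f ^ i)
          = -((f - 1) * ∑ i ∈ Finset.range n, f ^ i) := by noncomm_ring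
      rw [this, hgs, hf0]
      noncomm_ring
    have hsurj1f : Function.Surjective ((1 : W →ₗ[Λ] W) - f) := by
      intro w
      refine ⟨(∑ i ∈ Finset.range n, f ^ i) w, ?_⟩
      have h1 := LinearMap.ext_iff.mp hgeom w
      rw [Module.End.mul_apply] at h1
      exact h1.trans (by simp)
    have hrange1f : LinearMap.range ((1 : W →ₗ[Λ] W) - f) ≤ m₁ := by
      rintro z ⟨w, rfl⟩
      have h1 : ((1 : W →ₗ[Λ] W) - f) w = w - f w := by simp [LinearMap.sub_apply]
      rw [h1, ← Submodule.Quotient.mk_eq_zero m₁, ← Submodule.mkQ_apply, ← hq, map_sub,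
        hqf, sub_self]
    rw [LinearMap.range_eq_top.mpr hsurj1f] at hrange1f
    exact h₁.1 (top_le_iff.mp hrange1f)

theorem proper_le_rad {W : Type} [AddCommGroup W] [Module Λ W] [IsArtinianRing Λ]
    [Module.Finite Λ W] (hproj : Module.Projective Λ W) (hind : IndecomposableModule Λ W)
    {N : Submodule Λ W} (hN : N ≠ ⊤) : N ≤ ModuleRad Λ W := by
  haveI : IsNoetherian Λ W := noeth (Λ := Λ) W
  obtain ⟨m₀, hm₀, hNm₀⟩ := exists_coatom_above hN
  have hrad : m₀ ≤ ModuleRad Λ W := by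
    intro x hxm
    by_contra hxrad
    obtain ⟨m₁, hm₁, hxm₁⟩ := rad_missing hxrad
    exact hxm₁ (coatom_unique hproj hind hm₀ hm₁ ▸ hxm)
  exact hNm₀.trans hrad

theorem simple_of_indec_ss {M : Type} [AddCommGroup M] [Module Λ M]
    (hss : IsSemisimpleModule Λ M) (hind : IndecomposableModule Λ M) :
    IsSimpleModule Λ M := by
  obtain ⟨⟨x, hx⟩, hnd⟩ := hind
  haveI : Nontrivial (Submodule Λ M) := by
    refine ⟨⊥, ⊤, fun h => hx ?_⟩
    rw [← Submodule.mem_bot (R := Λ), h]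
    exact Submodule.mem_top
  refine (isSimpleModule_iff Λ M).mpr ⟨fun N => ?_⟩
  haveI := hss
  obtain ⟨C, hC⟩ := exists_isCompl N
  by_cases hN : N = ⊥
  · exact Or.inl hN
  · by_cases hCbot : C = ⊥
    · have h1 := hC.sup_eq_top
      rw [hCbot, sup_bot_eq] at h1
      exact Or.inr h1
    · exact absurd ⟨N, C, hN, hCbot, hC⟩ hnd

theorem exists_indec_summand {X : Type} [AddCommGroup X] [Module Λ X] [IsArtinian Λ X]
    (Q : Submodule Λ X) : Q ≠ ⊥ → ∃ A B : Submodule Λ X,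
      A ⊔ B = Q ∧ A ⊓ B = ⊥ ∧ B ≠ ⊥ ∧ IndecomposableModule Λ ↥B := by
  have wf : WellFounded ((· < ·) : Submodule Λ X → Submodule Λ X → Prop) := IsWellFounded.wf
  refine wf.induction (C := fun Q => Q ≠ ⊥ → ∃ A B : Submodule Λ X,
    A ⊔ B = Q ∧ A ⊓ B = ⊥ ∧ B ≠ ⊥ ∧ IndecomposableModule Λ ↥B) Q ?_
  clear Q
  rintro Q ih hQ0
  by_cases hind : IndecomposableModule Λ ↥Q
  · exact ⟨⊥, Q, bot_sup_eq Q, bot_inf_eq Q, hQ0, hind⟩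
  · rw [IndecomposableModule, not_and_or] at hind
    rcases hind with hno | hex
    · exfalso
      push_neg at hno
      obtain ⟨x, hxQ, hx0⟩ := (Submodule.ne_bot_iff Q).mp hQ0
      exact hx0 (congrArg Subtype.val (hno ⟨x, hxQ⟩))
    · rw [not_not] at hex
      obtain ⟨A', B', hA'0, hB'0, hcompl⟩ := hex
      set A := Submodule.map Q.subtype A' with hA
      set B := Submodule.map Q.subtype B' with hB
      have hABsup : A ⊔ B = Q := by
        rw [hA, hB, ← Submodule.map_sup, hcompl.sup_eq_top, Submodule.map_top,
          Submodule.range_subtype]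
      have hABinf : A ⊓ B = ⊥ := by
        rw [hA, hB, ← Submodule.map_inf Q.subtype (Submodule.injective_subtype Q),
          hcompl.inf_eq_bot, Submodule.map_bot]
      have hB0 : B ≠ ⊥ := by
        intro h
        apply hB'0
        apply Submodule.map_injective_of_injective (Submodule.injective_subtype Q)
        rw [Submodule.map_bot]
        exact h
      have hBQ : B ≤ Q := by rw [← hABsup]; exact le_sup_right
      have hBltQ : B < Q := by
        refine lt_of_le_of_ne hBQ fun h => ?_
        have hAB : A ≤ B := by
          conv_rhs => rw [h, ← hABsup]
          exact le_sup_left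
        have hA0 : A = ⊥ := le_bot_iff.mp (hABinf ▸ le_inf le_rfl hAB)
        apply hA'0
        apply Submodule.map_injective_of_injective (Submodule.injective_subtype Q)
        rw [Submodule.map_bot]
        exact hA0
      obtain ⟨A'', B'', hsup'', hinf'', hB''0, hind''⟩ := ih B hBltQ hB0
      refine ⟨A ⊔ A'', B'', ?_, ?_, hB''0, hind''⟩
      · rw [sup_assoc, hsup'', hABsup]
      · rw [eq_bot_iff]
        rintro x ⟨hx1, hx2⟩
        obtain ⟨a, ha, a'', ha'', rfl⟩ := Submodule.mem_sup.mp hx1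
        have hA''B : A'' ≤ B := by rw [← hsup'']; exact le_sup_left
        have hB''B : B'' ≤ B := by rw [← hsup'']; exact le_sup_right
        have haB : a ∈ B := by
          have h1 : a = (a + a'') - a'' := by abel
          rw [h1]
          exact sub_mem (hB''B hx2) (hA''B ha'')
        have ha0 : a = 0 := by
          have h2 : a ∈ A ⊓ B := ⟨ha, haB⟩
          rwa [hABinf, Submodule.mem_bot] at h2
        have h3 : a'' ∈ A'' ⊓ B'' := ⟨ha'', by rwa [ha0, zero_add] at hx2⟩
        rw [hinf''] at h3
        simpa [ha0] using h3

noncomputable def sumEquivProd {X : Type} [AddCommGroup X] [Module Λ X]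
    {A B : Submodule Λ X} (h : A ⊓ B = ⊥) : (↥A × ↥B) ≃ₗ[Λ] ↥(A ⊔ B) := by
  refine LinearEquiv.ofBijective
    ((A.subtype.coprod B.subtype).codRestrict (A ⊔ B) fun p =>
      Submodule.add_mem_sup p.1.2 p.2.2) ⟨?_, ?_⟩
  · rw [← LinearMap.ker_eq_bot, eq_bot_iff]
    rintro ⟨a, b⟩ hab
    rw [LinearMap.mem_ker] at hab
    have h1 : (a : X) + (b : X) = 0 := by
      have h := congrArg Subtype.val hab
      change (A.subtype.coprod B.subtype) (a, b) = ((0 : ↥(A ⊔ B)) : X) at h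
      simpa using h
    have ha : (a : X) ∈ A ⊓ B := by
      refine ⟨a.2, ?_⟩
      have hneg : (a : X) = -(b : X) := by
        rw [eq_neg_iff_add_eq_zero]
        exact h1
      rw [hneg]
      exact B.neg_mem b.2
    rw [h, Submodule.mem_bot] at ha
    have hb : (b : X) = 0 := by
      rw [ha, zero_add] at h1
      exact h1
    rw [Submodule.mem_bot]
    rw [Prod.ext_iff]
    exact ⟨Subtype.ext ha, Subtype.ext hb⟩
  · rintro ⟨x, hx⟩
    obtain ⟨a, ha, b, hb, rfl⟩ := Submodule.mem_sup.mp hx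
    exact ⟨(⟨a, ha⟩, ⟨b, hb⟩), Subtype.ext rfl⟩

theorem proj_factor_left {M N W : Type} [AddCommGroup M] [Module Λ M] [AddCommGroup N]
    [Module Λ N] [AddCommGroup W] [Module Λ W] (e : (M × N) ≃ₗ[Λ] W)
    (hW : Module.Projective Λ W) : Module.Projective Λ M := by
  haveI := hW
  refine Module.Projective.of_split (e.toLinearMap.comp (LinearMap.inl Λ M N))
    ((LinearMap.fst Λ M N).comp e.symm.toLinearMap) ?_
  ext m
  simp

theorem proj_factor_right {M N W : Type} [AddCommGroup M] [Module Λ M] [AddCommGroup N]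
    [Module Λ N] [AddCommGroup W] [Module Λ W] (e : (M × N) ≃ₗ[Λ] W)
    (hW : Module.Projective Λ W) : Module.Projective Λ N := by
  haveI := hW
  refine Module.Projective.of_split (e.toLinearMap.comp (LinearMap.inr Λ M N))
    ((LinearMap.snd Λ M N).comp e.symm.toLinearMap) ?_
  ext m
  simp


theorem key [IsArtinianRing Λ] (hF : ConditionF Λ) (X : Type) [AddCommGroup X] [Module Λ X]
    [Module.Finite Λ X] (Q : Submodule Λ X) :
    ∀ (_ : Module.Projective Λ ↥Q) (T : Type) [AddCommGroup T] [Module Λ T]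
      (_ : IsSemisimpleModule Λ T) (M : Type) [AddCommGroup M] [Module Λ M]
      (_ : IndecomposableModule Λ M) (f : M →ₗ[Λ] ↥Q × T) (_ : Function.Injective f),
      Module.Projective Λ M ∨ IsSimpleModule Λ M := by
  haveI hnoeth : IsNoetherian Λ X := noeth (Λ := Λ) X
  have wf : WellFounded ((· < ·) : Submodule Λ X → Submodule Λ X → Prop) := IsWellFounded.wf
  refine wf.induction (C := fun Q => ∀ (_ : Module.Projective Λ ↥Q) (T : Type) [AddCommGroup T]
    [Module Λ T] (_ : IsSemisimpleModule Λ T) (M : Type) [AddCommGroup M] [Module Λ M]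
    (_ : IndecomposableModule Λ M) (f : M →ₗ[Λ] ↥Q × T) (_ : Function.Injective f),
    Module.Projective Λ M ∨ IsSimpleModule Λ M) Q ?_
  clear Q
  rintro Q ih hQproj T _ _ hT M _ _ hM f hf
  by_cases hQbot : Q = ⊥
  · right
    subst hQbot
    have hg : Function.Injective ((LinearMap.snd Λ ↥(⊥ : Submodule Λ X) T).comp f) := by
      intro m₁ m₂ h12
      apply hf
      rw [Prod.ext_iff]
      exact ⟨Subsingleton.elim _ _, h12⟩
    set g := (LinearMap.snd Λ ↥(⊥ : Submodule Λ X) T).comp f with hgdef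
    haveI := hT
    have e : M ≃ₗ[Λ] LinearMap.range g := LinearEquiv.ofInjective g hg
    haveI : IsSemisimpleModule Λ M := .congr e
    exact simple_of_indec_ss inferInstance hM
  · obtain ⟨A, B, hsup, hinf, hB0, hBind⟩ := exists_indec_summand Q hQbot
    have hAQ : A ≤ Q := by rw [← hsup]; exact le_sup_left
    have hBQ : B ≤ Q := by rw [← hsup]; exact le_sup_right
    have e' : (↥A × ↥B) ≃ₗ[Λ] ↥Q := (sumEquivProd hinf).trans (LinearEquiv.ofEq _ _ hsup)
    have hAproj : Module.Projective Λ ↥A := proj_factor_left e' hQproj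
    have hBproj : Module.Projective Λ ↥B := proj_factor_right e' hQproj
    haveI hBfin : Module.Finite Λ ↥B := Module.Finite.iff_fg.mpr (IsNoetherian.noetherian B)
    set gQ := (LinearMap.fst Λ ↥Q T).comp f with hgQ
    set gT := (LinearMap.snd Λ ↥Q T).comp f with hgT
    set d := e'.symm.toLinearMap.comp gQ with hd
    set gA := (LinearMap.fst Λ ↥A ↥B).comp d with hgA
    set gB := (LinearMap.snd Λ ↥A ↥B).comp d with hgB
    have inj3 : ∀ m : M, gA m = 0 → gB m = 0 → gT m = 0 → m = 0 := by
      intro m h1 h2 h3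
      have hdm : d m = 0 := by
        have h4 : d m = (gA m, gB m) := rfl
        rw [h4, h1, h2]
        rfl
      have hQm : gQ m = 0 := by
        have h5 : gQ m = e' (d m) := by
          rw [hd]
          simp
        rw [h5, hdm, map_zero]
      have h6 : f m = 0 := by
        have h7 : f m = (gQ m, gT m) := rfl
        rw [h7, hQm, h3]
        rfl
      exact hf (by rw [h6, map_zero])
    by_cases hsurj : Function.Surjective gB
    · haveI := hBproj
      obtain ⟨s, hs⟩ := Module.projective_lifting_property gB LinearMap.id hsurj
      have hsb : ∀ b, gB (s b) = b := fun b => by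
        have h1 := LinearMap.ext_iff.mp hs b
        simpa using h1
      have hcompl : IsCompl (LinearMap.ker gB) (LinearMap.range s) := by
        constructor
        · rw [disjoint_iff, eq_bot_iff]
          intro x hx
          obtain ⟨hk, hr⟩ := Submodule.mem_inf.mp hx
          obtain ⟨b, rfl⟩ := hr
          rw [LinearMap.mem_ker, hsb] at hk
          rw [Submodule.mem_bot, hk, map_zero]
        · rw [codisjoint_iff, eq_top_iff]
          intro m _
          have h1 : m = (m - s (gB m)) + s (gB m) := by abel
          rw [h1]
          refine Submodule.add_mem_sup ?_ ⟨gB m, rfl⟩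
          rw [LinearMap.mem_ker, map_sub, hsb, sub_self]
      have hor : LinearMap.ker gB = ⊥ ∨ LinearMap.range s = ⊥ := by
        by_contra hcon
        push_neg at hcon
        exact hM.2 ⟨_, _, hcon.1, hcon.2, hcompl⟩
      rcases hor with hker | hrange
      · left
        have hbij : Function.Bijective gB := ⟨LinearMap.ker_eq_bot.mp hker, hsurj⟩
        exact Module.Projective.of_equiv (LinearEquiv.ofBijective gB hbij).symm
      · exfalso
        obtain ⟨b0, hb0⟩ := hBind.1
        have h1 : s b0 ∈ LinearMap.range s := ⟨b0, rfl⟩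
        rw [hrange, Submodule.mem_bot] at h1
        apply hb0
        rw [← hsb b0, h1, map_zero]
    · have hrtop : LinearMap.range gB ≠ ⊤ := fun h => hsurj (LinearMap.range_eq_top.mp h)
      have hle : LinearMap.range gB ≤ ModuleRad Λ ↥B :=
        proper_le_rad (Λ := Λ) hBproj hBind hrtop
      set RB := ModuleRad Λ ↥B with hRB
      set gB' : M →ₗ[Λ] ↥RB := LinearMap.codRestrict RB gB (fun m => hle ⟨m, rfl⟩) with hgB'
      have hgBval : ∀ m, ((gB' m : ↥B)) = gB m := fun m => rfl
      rcases hF ↥B hBfin hBproj hBind with hRproj | hRsimple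
      · set mB := Submodule.map B.subtype RB with hmB
        have hmBleB : mB ≤ B := Submodule.map_subtype_le B RB
        have hAmB : A ⊓ mB = ⊥ := by
          rw [eq_bot_iff, ← hinf]
          exact inf_le_inf_left A hmBleB
        have hQ'le : A ⊔ mB ≤ Q := sup_le hAQ (hmBleB.trans hBQ)
        have hQ'lt : A ⊔ mB < Q := by
          refine lt_of_le_of_ne hQ'le fun heq => ?_
          have hBle : B ≤ mB := by
            intro b hb
            have hbQ : b ∈ A ⊔ mB := by rw [heq]; exact hBQ hb
            obtain ⟨a, ha, mb, hmb, rfl⟩ := Submodule.mem_sup.mp hbQ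
            have haB : a ∈ B := by
              have h1 : a = (a + mb) - mb := by abel
              rw [h1]
              exact sub_mem hb (hmBleB hmb)
            have ha0 : a = 0 := by
              have h2 : a ∈ A ⊓ B := ⟨ha, haB⟩
              rwa [hinf, Submodule.mem_bot] at h2
            rw [ha0, zero_add]
            exact hmb
          have hmBeq : mB = B := le_antisymm hmBleB hBle
          have hRBtop : RB = ⊤ := by
            apply Submodule.map_injective_of_injective (Submodule.injective_subtype B)
            have h3 : Submodule.map B.subtype ⊤ = B := by
              rw [Submodule.map_top, Submodule.range_subtype]
            rw [h3]
            exact hmBeq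
          refine rad_ne_top (Λ := Λ) hBind.1 ?_
          rw [← hRB]
          exact hRBtop
        set ψ := Submodule.equivMapOfInjective B.subtype (Submodule.injective_subtype B) RB
          with hψ
        haveI := hRproj
        haveI hmBproj : Module.Projective Λ ↥mB := Module.Projective.of_equiv ψ
        haveI := hAproj
        have e2 : (↥A × ↥mB) ≃ₗ[Λ] ↥(A ⊔ mB) := sumEquivProd hAmB
        have hQ'proj : Module.Projective Λ ↥(A ⊔ mB) := Module.Projective.of_equiv e2
        set h : M →ₗ[Λ] ↥(A ⊔ mB) := e2.toLinearMap.comp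
          (gA.prod (ψ.toLinearMap.comp gB')) with hh
        set f' : M →ₗ[Λ] ↥(A ⊔ mB) × T := h.prod gT with hf'
        have hf'inj : Function.Injective f' := by
          rw [← LinearMap.ker_eq_bot, eq_bot_iff]
          intro m hm
          rw [LinearMap.mem_ker] at hm
          have h1 : h m = 0 := congrArg Prod.fst hm
          have h2 : gT m = 0 := congrArg Prod.snd hm
          have h3 : (gA m, ψ (gB' m)) = (0 : ↥A × ↥mB) := by
            apply e2.injective
            rw [map_zero]
            exact h1
          have hA0 : gA m = 0 := congrArg Prod.fst h3
          have hB'0 : ψ (gB' m) = 0 := congrArg Prod.snd h3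
          have hB0' : gB m = 0 := by
            have h4 : gB' m = 0 := by
              apply ψ.injective
              rw [hB'0]
              exact ψ.map_zero.symm
            rw [← hgBval m, h4]
            rfl
          rw [Submodule.mem_bot]
          exact inj3 m hA0 hB0' h2
        exact ih (A ⊔ mB) hQ'lt hQ'proj T hT M hM f' hf'inj
      · have hAlt : A < Q := by
          refine lt_of_le_of_ne hAQ fun heq => ?_
          apply hB0
          have hBA : B ≤ A := by rw [heq, ← hsup]; exact le_sup_right
          rw [eq_bot_iff, ← hinf]
          exact le_inf hBA le_rfl
        haveI := hRsimple
        haveI hssRB : IsSemisimpleModule Λ ↥RB := inferInstance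
        haveI := hT
        haveI hssT' : IsSemisimpleModule Λ (↥RB × T) := prod_ss _ _
        set f' : M →ₗ[Λ] ↥A × (↥RB × T) := gA.prod (gB'.prod gT) with hf'
        have hf'inj : Function.Injective f' := by
          rw [← LinearMap.ker_eq_bot, eq_bot_iff]
          intro m hm
          rw [LinearMap.mem_ker] at hm
          have hA0 : gA m = 0 := congrArg Prod.fst hm
          have h2 := congrArg Prod.snd hm
          have hB'm : gB' m = 0 := congrArg Prod.fst h2
          have hTm : gT m = 0 := congrArg Prod.snd h2
          have hB0' : gB m = 0 := by
            rw [← hgBval m, hB'm]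
            rfl
          rw [Submodule.mem_bot]
          exact inj3 m hA0 hB0' hTm
        exact ih A hAlt hAproj (↥RB × T) hssT' M hM f' hf'inj

end CFD

/-- a left artinian ring satisfying (F) satisfies (D): every
indecomposable submodule of a finitely generated indecomposable projective
module is projective or simple. -/
theorem conditionF_implies_conditionD (Λ : Type) [Ring Λ] [IsArtinianRing Λ]
    (hF : ConditionF Λ) :
    ∀ (P : Type) [AddCommGroup P] [Module Λ P],
      Module.Finite Λ P → Module.Projective Λ P → IndecomposableModule Λ P →
        ∀ N : Submodule Λ P, IndecomposableModule Λ ↥N →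
          Module.Projective Λ ↥N ∨ IsSimpleModule Λ ↥N := by
  intro P _ _ hfin hproj hind N hNind
  haveI := hfin
  haveI := hproj
  by_cases hN : N = ⊤
  · left
    subst hN
    exact Module.Projective.of_equiv (Submodule.topEquiv (R := Λ) (M := P)).symm
  · have hle : N ≤ ModuleRad Λ P := CFD.proper_le_rad hproj hind hN
    rcases hF P hfin hproj hind with hRp | hRs
    · haveI : Subsingleton (Submodule Λ PUnit) :=
        ⟨fun a b => by
          ext x
          rw [Subsingleton.elim x 0]
          exact iff_of_true (zero_mem a) (zero_mem b)⟩
      haveI hssP : IsSemisimpleModule Λ PUnit := (isSemisimpleModule_iff Λ _).mpr Subsingleton.instComplementedLattice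
      set f : ↥N →ₗ[Λ] ↥(ModuleRad Λ P) × PUnit := (Submodule.inclusion hle).prod 0 with hf2
      have hfinj : Function.Injective f := by
        intro a b hab
        have h1 : Submodule.inclusion hle a = Submodule.inclusion hle b :=
          congrArg Prod.fst hab
        exact Submodule.inclusion_injective hle h1
      exact CFD.key hF P (ModuleRad Λ P) hRp PUnit hssP ↥N hNind f hfinj
    · right
      set N' := Submodule.comap (ModuleRad Λ P).subtype N with hN'
      haveI := hRs
      rcases eq_bot_or_eq_top N' with hb | ht
      · exfalso
        obtain ⟨x, hx⟩ := hNind.1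
        have hmem : (⟨(x : P), hle x.2⟩ : ↥(ModuleRad Λ P)) ∈ N' := by
          rw [hN', Submodule.mem_comap]
          exact x.2
        rw [hb, Submodule.mem_bot] at hmem
        have hval : (x : P) = 0 := congrArg Subtype.val hmem
        exact hx (Subtype.ext hval)
      · have hNrad : N = ModuleRad Λ P := by
          have h1 : Submodule.map (ModuleRad Λ P).subtype N' = N := by
            rw [hN', Submodule.map_comap_subtype]
            exact inf_eq_right.mpr hle
          rw [← h1, ht, Submodule.map_top, Submodule.range_subtype]
        rw [hNrad]
        exact hRs
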